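/- Let G be a bipartite graph with diameter at most 3, and let f be a proper 3-coloring of G such that each of the three color classes contains at least one b-vertex (i.e., f is a 3-b-coloring). Then f is a 3-fall-coloring of G, i.e., every vertex of G is a b-vertex. -/

import Mathlib

section aux

variable {V : Type*} (G : SimpleGraph V) (X : Set V)

/-- parity of a walk vs sides of the bipartition -/
lemma aux_walk_parity (hAdj : ∀ u w, G.Adj u w → (u ∈ X ↔ w ∉ X)) :
    ∀ {u v : V} (p : G.Walk u v), Even p.length ↔ (u ∈ X ↔ v ∈ X) := by
  intro u v p
  induction p with
  | nil => simp
  | cons h p ih =>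
    have := hAdj _ _ h
    simp only [SimpleGraph.Walk.length_cons, Nat.even_add_one, ih]
    tauto

/-- distinct same-side vertices have a common neighbor -/
lemma aux_common_neighbor (hAdj : ∀ u w, G.Adj u w → (u ∈ X ↔ w ∉ X))
    (hconn : G.Connected) (hdiam : ∀ u v, G.dist u v ≤ 3)
    {u v : V} (hne : u ≠ v) (hside : u ∈ X ↔ v ∈ X) :
    ∃ w, G.Adj u w ∧ G.Adj v w := by
  obtain ⟨p, hp⟩ := hconn.exists_walk_length_eq_dist u v
  have hev : Even p.length := (aux_walk_parity G X hAdj p).mpr hside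
  have hle : p.length ≤ 3 := hp ▸ hdiam u v
  have hnz : p.length ≠ 0 := by
    intro h0
    exact hne ((SimpleGraph.Walk.eq_of_length_eq_zero h0))
  have h2 : p.length = 2 := by
    rcases hev with ⟨k, hk⟩; omega
  cases p with
  | nil => simp at h2
  | cons h q =>
    cases q with
    | nil => simp at h2
    | cons h' q' =>
      have : q'.length = 0 := by
        simp only [SimpleGraph.Walk.length_cons] at h2; omega
      have hv := (SimpleGraph.Walk.eq_of_length_eq_zero this)
      subst hv
      exact ⟨_, h, h'.symm⟩

end aux

/-- in a connected bipartite graph with diameter at most 3, every proper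
3-coloring in which each color class contains a b-vertex (a 3-b-coloring) is a
3-fall-coloring: every vertex is a b-vertex. -/
theorem stmt_9 {V : Type*} (G : SimpleGraph V) (X Y : Set V)
    (hXY : ∀ v, v ∈ X ↔ v ∉ Y)
    (hbip : ∀ u v, G.Adj u v → (u ∈ X ∧ v ∈ Y) ∨ (u ∈ Y ∧ v ∈ X))
    (hconn : G.Connected)
    (hdiam : ∀ u v, G.dist u v ≤ 3)
    (f : V → Fin 3)
    (hproper : ∀ u v, G.Adj u v → f u ≠ f v)
    (hb : ∀ c : Fin 3, ∃ v, f v = c ∧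
        ∀ c' : Fin 3, ∃ w, (w = v ∨ G.Adj v w) ∧ f w = c') :
    ∀ v, ∀ c : Fin 3, ∃ w, (w = v ∨ G.Adj v w) ∧ f w = c := by
  have hAdj : ∀ u w, G.Adj u w → (u ∈ X ↔ w ∉ X) := by
    intro u w h
    have h1 := hXY u
    have h2 := hXY w
    rcases hbip u w h with ⟨hu, hw⟩ | ⟨hu, hw⟩ <;> tauto
  -- clean version of hAdj
  clear hbip hXY
  -- b-vertices give actual adjacent witnesses for other colors
  have hbAdj : ∀ c : Fin 3, ∃ v, f v = c ∧ ∀ c' : Fin 3, c' ≠ c → ∃ w, G.Adj v w ∧ f w = c' := by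
    intro c
    obtain ⟨v, hv, hall⟩ := hb c
    refine ⟨v, hv, fun c' hc' => ?_⟩
    obtain ⟨w, hw | hw, hfw⟩ := hall c'
    · subst hw; exact absurd (hv.symm.trans hfw).symm hc'
    · exact ⟨w, hw, hfw⟩
  -- each color appears on each side
  have happears : ∀ (c : Fin 3) (v0 : V), ∃ z, (z ∈ X ↔ v0 ∈ X) ∧ f z = c := by
    intro c v0
    by_contra hno
    push_neg at hno
    -- all vertices of color c are on the opposite side of v0
    have hOpp : ∀ z, f z = c → ¬ (z ∈ X ↔ v0 ∈ X) := fun z hz hiff => hno z hiff hz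
    obtain ⟨a, d, ha, hd, hdist, hcover⟩ :=
      (by decide : ∀ c : Fin 3, ∃ a d : Fin 3, a ≠ c ∧ d ≠ c ∧ d ≠ a ∧
        ∀ e : Fin 3, e = c ∨ e = a ∨ e = d) c
    obtain ⟨ua, hua, huaall⟩ := hbAdj a
    obtain ⟨ud, hud, hudall⟩ := hbAdj d
    -- ua is on v0's side
    have hSide : ∀ u : V, (∃ w, G.Adj u w ∧ f w = c) → (u ∈ X ↔ v0 ∈ X) := by
      rintro u ⟨w, hadj, hfw⟩
      have h1 := hAdj u w hadj
      have h2 := hOpp w hfw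
      tauto
    have huaSide := hSide ua (huaall c (Ne.symm ha))
    have hudSide := hSide ud (hudall c (Ne.symm hd))
    obtain ⟨p, hpadj, hpf⟩ := huaall d hdist
    obtain ⟨r, hradj, hrf⟩ := hudall a (Ne.symm hdist)
    have hpr : p ≠ r := by
      intro h; rw [h] at hpf; rw [hpf] at hrf; exact hdist hrf
    have hpside := hAdj ua p hpadj
    have hrside := hAdj ud r hradj
    have hsame : p ∈ X ↔ r ∈ X := by tauto
    obtain ⟨x, hxp, hxr⟩ := aux_common_neighbor G X hAdj hconn hdiam hpr hsame
    have hfx1 : f x ≠ d := hpf ▸ (hproper p x hxp).symm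
    have hfx2 : f x ≠ a := hrf ▸ (hproper r x hxr).symm
    have hfxc : f x = c := by rcases hcover (f x) with h | h | h <;> tauto
    have hxside := hAdj p x hxp
    exact hOpp x hfxc (by tauto)
  -- main argument
  intro v c
  by_cases hvc : f v = c
  · exact ⟨v, Or.inl rfl, hvc⟩
  · obtain ⟨d, hd1, hd2, hcover⟩ :
        ∃ d, d ≠ f v ∧ d ≠ c ∧ ∀ e : Fin 3, e = f v ∨ e = c ∨ e = d :=
      (by decide : ∀ a c : Fin 3, a ≠ c →
        ∃ d, d ≠ a ∧ d ≠ c ∧ ∀ e : Fin 3, e = a ∨ e = c ∨ e = d) (f v) c hvc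
    obtain ⟨z, hzside, hzf⟩ := happears d v
    have hzv : z ≠ v := by intro h; rw [h] at hzf; exact hd1 hzf.symm
    obtain ⟨w, hwz, hwv⟩ := aux_common_neighbor G X hAdj hconn hdiam hzv hzside
    have h1 : f w ≠ d := hzf ▸ (hproper z w hwz).symm
    have h2 : f w ≠ f v := (hproper v w hwv).symm
    have : f w = c := by rcases hcover (f w) with h | h | h <;> tauto
    exact ⟨w, Or.inr hwv, this⟩
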